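/- Let g be a finite-dimensional complex Lie algebra admitting a periodic derivation D (D^m = id for some m ≥ 1). Then the inverse linear map D^{-1} is again a derivation of g. -/

import Mathlib

open Module Polynomial

/-- If `α`, `β`, `α+β` are all `m`-th roots of unity then `α⁻¹ + β⁻¹ = (α+β)⁻¹`. -/
lemma inv_add_inv_of_rootsOfUnity {m : ℕ} (hm : 1 ≤ m) {α β : ℂ}
    (hα : α ^ m = 1) (hβ : β ^ m = 1) (hαβ : (α + β) ^ m = 1) :
    α⁻¹ + β⁻¹ = (α + β)⁻¹ := by
  have hmod : ∀ z : ℂ, z ^ m = 1 → z⁻¹ = starRingEnd ℂ z := fun z hz =>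
    Complex.inv_eq_conj (Complex.norm_eq_one_of_pow_eq_one hz (by omega))
  rw [hmod α hα, hmod β hβ, hmod _ hαβ, map_add]

lemma pow_apply_eigenvec {L : Type*} [AddCommGroup L] [Module ℂ L]
    (f : Module.End ℂ L) (α : ℂ) (x : L) (h : f x = α • x) (k : ℕ) :
    (f ^ k) x = α ^ k • x := by
  induction k with
  | zero => simp
  | succ n ih =>
    rw [pow_succ, Module.End.mul_apply, h, map_smul, ih, smul_smul]
    ring_nf

theorem inverse_is_derivation (L : Type*) [LieRing L] [LieAlgebra ℂ L]
    [FiniteDimensional ℂ L] (D : LieDerivation ℂ L L) (m : ℕ) (hm : 1 ≤ m)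
    (hDm : D.toLinearMap ^ m = 1) :
    ∃ E : LieDerivation ℂ L L,
      E.toLinearMap ∘ₗ D.toLinearMap = LinearMap.id ∧
      D.toLinearMap ∘ₗ E.toLinearMap = LinearMap.id := by
  set f : Module.End ℂ L := D.toLinearMap with hf
  set P : Module.End ℂ L := f ^ (m - 1) with hP
  have hPD : P * f = 1 := by
    rw [hP, ← pow_succ, Nat.sub_add_cancel hm, hDm]
  have hDP : f * P = 1 := by
    rw [hP, ← pow_succ', Nat.sub_add_cancel hm, hDm]
  -- f is semisimple
  have haev : aeval f (X ^ m - C 1 : ℂ[X]) = 0 := by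
    simp [hDm]
  have hsqf : Squarefree (X ^ m - C 1 : ℂ[X]) :=
    (Polynomial.separable_X_pow_sub_C (1 : ℂ)
      (Nat.cast_ne_zero.mpr (by omega)) one_ne_zero).squarefree
  have hss : f.IsSemisimple :=
    Module.End.isSemisimple_of_squarefree_aeval_eq_zero hsqf haev
  have htop : ⨆ μ : ℂ, f.eigenspace μ = ⊤ := by
    have h1 := Module.End.iSup_maxGenEigenspace_eq_top f
    have h2 : ∀ μ : ℂ, f.maxGenEigenspace μ = f.eigenspace μ := fun μ =>
      hss.isFinitelySemisimple.maxGenEigenspace_eq_eigenspace μ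
    simpa [h2] using h1
  -- eigenvalue facts
  have heval : ∀ (α : ℂ) (x : L), x ≠ 0 → f x = α • x → α ^ m = 1 := by
    intro α x hx hfx
    have hfm : (f ^ m) x = α ^ m • x := pow_apply_eigenvec f α x hfx m
    rw [hDm] at hfm
    have h0 : (α ^ m - 1) • x = 0 := by
      rw [sub_smul, one_smul, ← hfm, Module.End.one_apply, sub_self]
    rcases smul_eq_zero.mp h0 with h | h
    · exact sub_eq_zero.mp h
    · exact absurd h hx
  have hPx : ∀ (α : ℂ) (x : L), α ^ m = 1 → f x = α • x → P x = α⁻¹ • x := by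
    intro α x hα hfx
    have hα0 : α ≠ 0 := by
      intro h
      rw [h] at hα
      simp [zero_pow (show m ≠ 0 by omega)] at hα
    rw [hP, pow_apply_eigenvec f α x hfx (m - 1)]
    congr 1
    field_simp
    rw [← pow_succ, Nat.sub_add_cancel hm, hα]
  -- the bilinear defect map
  set T : L →ₗ[ℂ] L →ₗ[ℂ] L := LinearMap.mk₂ ℂ (fun a b => P ⁅a, b⁆ - ⁅P a, b⁆ - ⁅a, P b⁆)
    (fun a a' b => by simp only [add_lie, lie_add, map_add]; abel)
    (fun c a b => by simp only [smul_lie, lie_smul, map_smul, smul_sub])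
    (fun a b b' => by simp only [add_lie, lie_add, map_add]; abel)
    (fun c a b => by simp only [smul_lie, lie_smul, map_smul, smul_sub]) with hT
  have hTzero : ∀ a b, T a b = 0 := by
    intro a b
    have ha : a ∈ ⨆ μ : ℂ, f.eigenspace μ := htop ▸ Submodule.mem_top
    have hb : b ∈ ⨆ μ : ℂ, f.eigenspace μ := htop ▸ Submodule.mem_top
    induction ha using Submodule.iSup_induction' with
    | mem α x hx =>
      induction hb using Submodule.iSup_induction' with
      | mem β y hy =>
        rw [Module.End.mem_eigenspace_iff] at hx hy
        rcases eq_or_ne x 0 with rfl | hx0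
        · simp [hT]
        rcases eq_or_ne y 0 with rfl | hy0
        · simp [hT]
        have hα : α ^ m = 1 := heval α x hx0 hx
        have hβ : β ^ m = 1 := heval β y hy0 hy
        have hbr : f ⁅x, y⁆ = (α + β) • ⁅x, y⁆ := by
          have h1 : D ⁅x, y⁆ = ⁅x, D y⁆ + ⁅D x, y⁆ := D.apply_lie_eq_add x y
          have hx' : D x = α • x := hx
          have hy' : D y = β • y := hy
          show D ⁅x, y⁆ = (α + β) • ⁅x, y⁆
          rw [h1, hx', hy', lie_smul, smul_lie, add_smul]
          abel
        rcases eq_or_ne ⁅x, y⁆ 0 with hxy | hxy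
        · simp [hT, hxy, hPx α x hα hx, hPx β y hβ hy, lie_smul, smul_lie]
        · have hαβ : (α + β) ^ m = 1 := heval (α + β) ⁅x, y⁆ hxy hbr
          have key := inv_add_inv_of_rootsOfUnity hm hα hβ hαβ
          simp only [hT, LinearMap.mk₂_apply]
          rw [hPx α x hα hx, hPx β y hβ hy, hPx (α + β) ⁅x, y⁆ hαβ hbr,
            smul_lie, lie_smul, ← key, add_smul]
          abel
      | zero => simp [hT]
      | add y y' _ _ ih ih' =>
        simp only [hT] at ih ih' ⊢
        rw [map_add, ih, ih', add_zero]
    | zero => simp [hT]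
    | add x x' _ _ ih ih' =>
      simp only [hT] at ih ih' ⊢
      rw [map_add, LinearMap.add_apply, ih, ih', add_zero]
  have hleib : ∀ a b : L, P ⁅a, b⁆ = ⁅a, P b⁆ - ⁅b, P a⁆ := by
    intro a b
    have h := hTzero a b
    simp only [hT, LinearMap.mk₂_apply] at h
    rw [sub_sub, sub_eq_zero] at h
    rw [← lie_skew (P a) b] at h
    rw [h]
    abel
  refine ⟨⟨P, hleib⟩, ?_, ?_⟩
  · ext x; exact LinearMap.congr_fun hPD x
  · ext x; exact LinearMap.congr_fun hDP x
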